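/- arXiv:2601.22369 — 2 statements merged into one kernel-verified Lean document; each statement's English description precedes it below -/
import Mathlib

section
/- (Agreement for Algorithm 1, property P1.) For every input assignment init : Fin n → Bool, every crash pattern with at most one faulty process, and every delivery pattern consistent with it, all surviving processes reach the same decision: for all processes p and p' with crash p = none and crash p' = none, dec p = dec p'. -/
open scoped Classical

/-- Round-1 state of process `p` in Algorithm 1: `true` (internal:a) iff `p`
received every round-0 message and every process proposed commit. -/
noncomputable def sState {n : ℕ} (init : Fin n → Bool)
    (delivered : Fin 2 → Fin n → Fin n → Prop) (p : Fin n) : Bool :=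
  if (∀ q : Fin n, delivered 0 q p) ∧ (∀ q : Fin n, init q = true) then true else false

/-- Round-2 decision of process `p` in Algorithm 1: commit (`true`) iff every
round-1 message that `p` receives carries state internal:a. -/
noncomputable def decA {n : ℕ} (init : Fin n → Bool)
    (delivered : Fin 2 → Fin n → Fin n → Prop) (p : Fin n) : Bool :=
  if ∀ q : Fin n, delivered 1 q p → sState init delivered q = true then true else false

/-- The delivery pattern is consistent with the crash pattern. -/
def consistentDel {n : ℕ} (crash : Fin n → Option (Fin 2))
    (delivered : Fin 2 → Fin n → Fin n → Prop) : Prop :=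
  (∀ (t : Fin 2) (q p : Fin n),
      (crash q = none ∨ ∃ s : Fin 2, crash q = some s ∧ t.val < s.val) → delivered t q p) ∧
  (∀ (t : Fin 2) (q p : Fin n) (s : Fin 2), crash q = some s → s.val < t.val →
      ¬ delivered t q p)

/-- Agreement for Algorithm 1, property P1. -/
theorem stmt_12 (n : ℕ) (hn : 1 ≤ n) :
    ∀ (init : Fin n → Bool) (crash : Fin n → Option (Fin 2)),
      (Finset.univ.filter fun q => crash q ≠ none).card ≤ 1 →
      ∀ delivered : Fin 2 → Fin n → Fin n → Prop,
        consistentDel crash delivered →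
        ∀ p p' : Fin n, crash p = none → crash p' = none →
          decA init delivered p = decA init delivered p' := by
  intro init crash hcard delivered hcons p p' hp hp'
  obtain ⟨hdel, hndel⟩ := hcons
  have hdecA : ∀ x, (decA init delivered x = true ↔
      ∀ q, delivered 1 q x → sState init delivered q = true) := by
    intro x; unfold decA; split <;> simp_all
  rw [Bool.eq_iff_iff, hdecA, hdecA]
  by_cases hinit : ∀ q, init q = true
  · by_cases hr0 : ∃ r0, crash r0 = some 0
    · obtain ⟨r0, hr0⟩ := hr0
      have huniq : ∀ q, crash q ≠ none → q = r0 := by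
        intro q hq
        have h1 : q ∈ Finset.univ.filter fun q => crash q ≠ none := by simp [hq]
        have h2 : r0 ∈ Finset.univ.filter fun q => crash q ≠ none := by simp [hr0]
        exact Finset.card_le_one.mp hcard _ h1 _ h2
      have hd1 : ∀ (q x : Fin n), delivered 1 q x ↔ q ≠ r0 := by
        intro q x
        constructor
        · rintro h rfl; exact absurd h (hndel 1 _ x 0 hr0 (by norm_num))
        · intro hq
          exact hdel 1 q x (Or.inl (by
            by_contra hc; exact hq (huniq q hc)))
      constructor <;> intro h q hq <;>
        exact h q ((hd1 q _).mpr ((hd1 q _).mp hq))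
    · have hs : ∀ q, sState init delivered q = true := by
        intro q
        unfold sState
        rw [if_pos]
        refine ⟨fun r => hdel 0 r q ?_, hinit⟩
        cases hcr : crash r with
        | none => exact Or.inl rfl
        | some s =>
          refine Or.inr ⟨s, rfl, ?_⟩
          have : s ≠ 0 := by rintro rfl; exact hr0 ⟨r, hcr⟩
          omega
      simp [hs]
  · have hs : ∀ q, sState init delivered q = false := by
      intro q; unfold sState; rw [if_neg]; intro ⟨_, h2⟩; exact hinit h2
    have hd : ∀ x, crash x = none → delivered 1 x x := fun x hx =>
      hdel 1 x x (Or.inl hx)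
    constructor <;> intro h
    · exact absurd (h p (hd p hp)) (by simp [hs])
    · exact absurd (h p' (hd p' hp')) (by simp [hs])
end

section
/- (Abort validity for Algorithm 1, property P3.) If some process q₀ has init q₀ = false (it proposes abort), then for every crash pattern with at most one faulty process and every delivery pattern consistent with it, every surviving process decides abort: dec p = false for every p with crash p = none. -/
open scoped Classical

/-- Abort validity for Algorithm 1, property P3. -/
theorem stmt_13 (n : ℕ) (hn : 1 ≤ n)
    (init : Fin n → Bool) (q₀ : Fin n) (hq₀ : init q₀ = false) :
    ∀ crash : Fin n → Option (Fin 2),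
      (Finset.univ.filter fun q => crash q ≠ none).card ≤ 1 →
      ∀ delivered : Fin 2 → Fin n → Fin n → Prop,
        consistentDel crash delivered →
        ∀ p : Fin n, crash p = none → decA init delivered p = false := by
  intro crash _ delivered hcons p hp
  have hdel : delivered 1 p p := hcons.1 1 p p (Or.inl hp)
  have hs : sState init delivered p = false := by
    rw [sState, if_neg]
    rintro ⟨-, h2⟩
    exact absurd (h2 q₀) (by simp [hq₀])
  rw [decA, if_neg]
  intro h
  have := h p hdel
  simp [hs] at this
end
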